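/- For every positive integer s, the set S⁻¹({s}) = {x ∈ ℕ : S(x) = s} is nonempty; moreover, letting ξ_s denote its minimum, P(ξ_{s+1}) = ξ_s for every s ≥ 1. -/
import Mathlib

open scoped Classical

/-- The largest element of ℙ*₁ = ℙ* ∪ {1} (prime-powers together with 1) not exceeding `x`. -/
noncomputable def q (x : ℕ) : ℕ :=
  sSup {m : ℕ | (IsPrimePow m ∨ m = 1) ∧ m ≤ x}

/-- The prime-power map. -/
noncomputable def P (x : ℕ) : ℕ :=
  if x = 1 then 1
  else if IsPrimePow x then x / x.minFac
  else x - q x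

/-- The orbit of `x` under `P`: `orbit x 1 = x` and `orbit x (n+1) = P (orbit x n)`. -/
noncomputable def orbit (x n : ℕ) : ℕ := P^[n - 1] x

/-- The transient length `T x = min {n ≥ 1 : x_n = 1}`. -/
noncomputable def T (x : ℕ) : ℕ := sInf {n : ℕ | 1 ≤ n ∧ orbit x n = 1}

/-- The settling time `S x = min {n ≥ 1 : x_n ∈ ℙ*₁}`. -/
noncomputable def S (x : ℕ) : ℕ :=
  sInf {n : ℕ | 1 ≤ n ∧ (IsPrimePow (orbit x n) ∨ orbit x n = 1)}

/-- `xi s` is the smallest positive integer with settling time `s`. -/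
noncomputable def xi (s : ℕ) : ℕ := sInf {x : ℕ | 0 < x ∧ S x = s}

lemma q_bdd (x : ℕ) : BddAbove {m : ℕ | (IsPrimePow m ∨ m = 1) ∧ m ≤ x} :=
  ⟨x, fun _ hm => hm.2⟩

lemma q_mem {x : ℕ} (hx : 1 ≤ x) :
    (IsPrimePow (q x) ∨ q x = 1) ∧ q x ≤ x :=
by
  have hne : ({m : ℕ | (IsPrimePow m ∨ m = 1) ∧ m ≤ x}).Nonempty :=
    ⟨1, ⟨Or.inr rfl, hx⟩⟩
  exact Nat.sSup_mem hne (q_bdd x)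

lemma le_q {m x : ℕ} (hm : IsPrimePow m ∨ m = 1) (hmx : m ≤ x) : m ≤ q x :=
  le_csSup (q_bdd x) ⟨hm, hmx⟩

lemma q_mono {x y : ℕ} (hx : 1 ≤ x) (h : x ≤ y) : q x ≤ q y :=
  le_q (q_mem hx).1 ((q_mem hx).2.trans h)

lemma q_lt {x : ℕ} (hx : 1 ≤ x) (h1 : x ≠ 1) (h2 : ¬ IsPrimePow x) : q x < x := by
  rcases lt_or_eq_of_le (q_mem hx).2 with h | h
  · exact h
  · rcases (q_mem hx).1 with hp | hp
    · exact absurd (h ▸ hp) h2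
    · exact absurd (h ▸ hp) h1

lemma P_eq {x : ℕ} (h1 : x ≠ 1) (h2 : ¬ IsPrimePow x) : P x = x - q x := by
  simp [P, h1, h2]

lemma P_pos {x : ℕ} (hx : 1 ≤ x) : 1 ≤ P x := by
  unfold P
  split_ifs with h1 h2
  · exact le_refl 1
  · exact (Nat.one_le_div_iff (Nat.minFac_pos x)).mpr (Nat.minFac_le (by omega))
  · have h := q_lt hx h1 h2
    omega

lemma P_lt {x : ℕ} (hx : 2 ≤ x) : P x < x := by
  unfold P
  split_ifs with h1 h2
  · omega
  · exact Nat.div_lt_self (by omega) (Nat.minFac_prime (by omega)).one_lt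
  · have h := le_q (Or.inr rfl) (by omega : 1 ≤ x)
    omega

lemma orbit_one (x : ℕ) : orbit x 1 = x := rfl

lemma orbit_succ (x n : ℕ) (hn : 1 ≤ n) : orbit x (n + 1) = orbit (P x) n := by
  obtain ⟨m, rfl⟩ := Nat.exists_eq_add_of_le hn
  show P^[1 + m + 1 - 1] x = P^[1 + m - 1] (P x)
  have e1 : 1 + m + 1 - 1 = m + 1 := by omega
  have e2 : 1 + m - 1 = m := by omega
  rw [e1, e2, Function.iterate_succ_apply]

lemma settle_nonempty :
    ∀ x, 1 ≤ x →
    {n : ℕ | 1 ≤ n ∧ (IsPrimePow (orbit x n) ∨ orbit x n = 1)}.Nonempty := by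
  intro x
  induction x using Nat.strong_induction_on with
  | _ x ih =>
    intro hx
    by_cases h : IsPrimePow x ∨ x = 1
    · exact ⟨1, le_refl 1, by rwa [orbit_one]⟩
    · push_neg at h
      obtain ⟨n, hn1, hn2⟩ := ih (P x) (P_lt (by omega)) (P_pos hx)
      exact ⟨n + 1, by omega, by rwa [orbit_succ x n hn1]⟩

lemma S_mem {x : ℕ} (hx : 1 ≤ x) :
    1 ≤ S x ∧ (IsPrimePow (orbit x (S x)) ∨ orbit x (S x) = 1) :=
  Nat.sInf_mem (settle_nonempty x hx)

lemma S_le {x n : ℕ} (h1 : 1 ≤ n) (h2 : IsPrimePow (orbit x n) ∨ orbit x n = 1) :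
    S x ≤ n :=
  Nat.sInf_le ⟨h1, h2⟩

lemma S_eq_one {x : ℕ} (h : IsPrimePow x ∨ x = 1) : S x = 1 := by
  have hx : 1 ≤ x := by
    rcases h with h | h
    · exact h.pos
    · omega
  have h1 := S_le (x := x) le_rfl (by rwa [orbit_one])
  have h2 := (S_mem hx).1
  omega

lemma S_succ {x : ℕ} (hx : 1 ≤ x) (h : ¬(IsPrimePow x ∨ x = 1)) :
    S x = S (P x) + 1 := by
  have hPx : 1 ≤ P x := P_pos hx
  have hmem := S_mem hPx
  have hSx := S_mem hx
  apply le_antisymm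
  · apply S_le (by omega)
    rw [orbit_succ x (S (P x)) hmem.1]
    exact hmem.2
  · have hS1 : S x ≠ 1 := by
      intro he
      rw [he, orbit_one] at hSx
      exact h hSx.2
  -- S x ≥ 2
    have h2' : 2 ≤ S x := by have := hSx.1; omega
    have hle : S (P x) ≤ S x - 1 := by
      apply S_le (by omega)
      rw [← orbit_succ x (S x - 1) (by omega)]
      have e : S x - 1 + 1 = S x := by omega
      rw [e]
      exact hSx.2
    omega

lemma two_distinct_primes {k : ℕ} (h2 : 2 ≤ k) (h : ¬ IsPrimePow k) :
    ∃ p r : ℕ, p.Prime ∧ r.Prime ∧ p ≠ r ∧ p ∣ k ∧ r ∣ k := by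
  rw [isPrimePow_iff_unique_prime_dvd] at h
  simp only [ExistsUnique, not_exists, not_and, not_forall] at h
  have hp := Nat.minFac_prime (by omega : k ≠ 1)
  have hpd : k.minFac ∣ k := Nat.minFac_dvd k
  obtain ⟨r, hr, hrp⟩ := h k.minFac ⟨hp, hpd⟩
  exact ⟨r, k.minFac, hr.1, hp, hrp, hr.2, hpd⟩

lemma interval_not_pp {y k : ℕ} (hy : 1 ≤ y) (hk2 : 2 ≤ k) (hk : k ≤ y + 1) :
    ¬ IsPrimePow ((Nat.factorial (y + 1)) ^ 2 + k) := by
  intro hpp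
  set n := (Nat.factorial (y + 1)) ^ 2 with hn
  have hfd : Nat.factorial (y + 1) ∣ n := dvd_pow_self _ (by norm_num)
  have hnpos : 0 < n := pow_pos (Nat.factorial_pos _) 2
  obtain ⟨r, m, hr, hm, hrm⟩ := hpp
  have hrN : r.Prime := Nat.prime_iff.mpr hr
  by_cases hkpp : IsPrimePow k
  · obtain ⟨p, j, hp, hj, hpj⟩ := hkpp
    have hpN : p.Prime := Nat.prime_iff.mpr hp
    have hpjle : p ^ j ≤ y + 1 := by rw [hpj]; omega
    have hdf : p ^ j ∣ Nat.factorial (y + 1) :=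
      Nat.dvd_factorial (pow_pos hpN.pos j) hpjle
    have hdn : p ^ (2 * j) ∣ n := by
      have : (p ^ j) ^ 2 ∣ n := pow_dvd_pow_of_dvd hdf 2
      rwa [← pow_mul, mul_comm j 2] at this
    have hpk : p ∣ k := by rw [← hpj]; exact dvd_pow_self p (by omega)
    have hpn : p ∣ n := dvd_trans (dvd_trans (dvd_pow_self p (by omega)) hdf) hfd
    have hpnk : p ∣ r ^ m := by rw [hrm]; exact dvd_add hpn hpk
    have hpr : p = r := by
      have := hpN.dvd_of_dvd_pow hpnk
      exact (Nat.prime_dvd_prime_iff_eq hpN hrN).mp this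
    subst hpr
    have hle : p ^ (2 * j) ≤ n := Nat.le_of_dvd hnpos hdn
    have hlt : 2 * j < m := by
      have h1 : p ^ (2 * j) < p ^ m := by
        have : p ^ m = n + k := hrm
        omega
      exact (Nat.pow_lt_pow_iff_right hpN.one_lt).mp h1
    have hd1 : p ^ (j + 1) ∣ n := dvd_trans (pow_dvd_pow p (by omega)) hdn
    have hd2 : p ^ (j + 1) ∣ p ^ m := pow_dvd_pow p (by omega)
    have hkval : k = p ^ m - n := by omega
    have hdk : p ^ (j + 1) ∣ k := by rw [hkval]; exact Nat.dvd_sub hd2 hd1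
    have hlek : p ^ (j + 1) ≤ k := Nat.le_of_dvd (by omega) hdk
    have : p ^ (j + 1) ≤ p ^ j := by rw [hpj]; exact hlek
    have := (Nat.pow_le_pow_iff_right hpN.one_lt).mp this
    omega
  · obtain ⟨p, p', hp, hp', hne, hpk, hp'k⟩ := two_distinct_primes hk2 hkpp
    have hple : p ≤ y + 1 := le_trans (Nat.le_of_dvd (by omega) hpk) hk
    have hp'le : p' ≤ y + 1 := le_trans (Nat.le_of_dvd (by omega) hp'k) hk
    have hpn : p ∣ n := dvd_trans (Nat.dvd_factorial hp.pos hple) hfd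
    have hp'n : p' ∣ n := dvd_trans (Nat.dvd_factorial hp'.pos hp'le) hfd
    have h1 : p ∣ r ^ m := by rw [hrm]; exact dvd_add hpn hpk
    have h2 : p' ∣ r ^ m := by rw [hrm]; exact dvd_add hp'n hp'k
    have e1 : p = r := (Nat.prime_dvd_prime_iff_eq hp hrN).mp (hp.dvd_of_dvd_pow h1)
    have e2 : p' = r := (Nat.prime_dvd_prime_iff_eq hp' hrN).mp (hp'.dvd_of_dvd_pow h2)
    exact hne (e1.trans e2.symm)

lemma exists_preimage {y : ℕ} (hy : 1 ≤ y) :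
    ∃ x, 2 ≤ x ∧ ¬ IsPrimePow x ∧ P x = y := by
  set n := (Nat.factorial (y + 1)) ^ 2 with hn
  have hnpos : 0 < n := pow_pos (Nat.factorial_pos _) 2
  set m := q (n + (y + 1)) with hm
  have hny : 1 ≤ n + (y + 1) := by omega
  have hmem := q_mem hny
  rw [← hm] at hmem
  have h1m : 1 ≤ m := le_q (Or.inr rfl) (by omega)
  have hm_le : m ≤ n + 1 := by
    by_contra hc
    push_neg at hc
    have hk2 : 2 ≤ m - n := by omega
    have hk : m - n ≤ y + 1 := by omega
    have hppm : IsPrimePow m := by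
      rcases hmem.1 with h | h
      · exact h
      · omega
    have : IsPrimePow (n + (m - n)) := by
      have e : n + (m - n) = m := by omega
      rw [e]; exact hppm
    exact interval_not_pp hy hk2 hk this
  have hnotpp : ¬ IsPrimePow (m + y) := by
    intro hpp
    have : m + y ≤ m := by
      rw [hm]
      exact le_q (Or.inl hpp) (by omega)
    omega
  refine ⟨m + y, by omega, hnotpp, ?_⟩
  have hqx : q (m + y) = m := by
    apply le_antisymm
    · rw [hm]
      exact q_mono (by omega) (by omega)
    · exact le_q hmem.1 (by omega)
  rw [P_eq (by omega) hnotpp, hqx]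
  omega

theorem stmt_14 :
    (∀ s : ℕ, 1 ≤ s → {x : ℕ | 0 < x ∧ S x = s}.Nonempty) ∧
    (∀ s : ℕ, 1 ≤ s → P (xi (s + 1)) = xi s) := by
  have hfiber : ∀ s : ℕ, 1 ≤ s → {x : ℕ | 0 < x ∧ S x = s}.Nonempty := by
    intro s
    induction s with
    | zero => omega
    | succ t ih =>
      intro _
      by_cases ht : 1 ≤ t
      · obtain ⟨y, hy, hSy⟩ := ih ht
        obtain ⟨x, hx2, hxpp, hPx⟩ := exists_preimage hy
        refine ⟨x, by omega, ?_⟩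
        rw [S_succ (by omega) (by push_neg; exact ⟨hxpp, by omega⟩), hPx, hSy]
      · have : t = 0 := by omega
        subst this
        exact ⟨1, one_pos, S_eq_one (Or.inr rfl)⟩
  refine ⟨hfiber, ?_⟩
  intro s hs
  have hmem1 : xi (s + 1) ∈ {x : ℕ | 0 < x ∧ S x = s + 1} :=
    Nat.sInf_mem (hfiber (s + 1) (by omega))
  have hmems : xi s ∈ {x : ℕ | 0 < x ∧ S x = s} := Nat.sInf_mem (hfiber s hs)
  obtain ⟨hpos1, hS1⟩ := hmem1
  obtain ⟨hposs, hSs⟩ := hmems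
  set X := xi (s + 1) with hX
  have hnot : ¬(IsPrimePow X ∨ X = 1) := by
    intro h
    have := S_eq_one h
    omega
  have hSrec : S X = S (P X) + 1 := S_succ hpos1 hnot
  have hSP : S (P X) = s := by omega
  have hPpos : 0 < P X := P_pos hpos1
  have hge : xi s ≤ P X := Nat.sInf_le ⟨hPpos, hSP⟩
  rcases eq_or_lt_of_le hge with h | h
  · exact h.symm
  · exfalso
    push_neg at hnot
    have hPX : P X = X - q X := P_eq hnot.2 hnot.1
    have hq_lt : q X < X := q_lt hpos1 hnot.2 hnot.1
    have hq1 : 1 ≤ q X := le_q (Or.inr rfl) hpos1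
    set x'' := xi s + q X with hx''
    have hx''lt : x'' < X := by omega
    have hqx'' : q x'' = q X := by
      apply le_antisymm
      · exact q_mono (by omega) (le_of_lt hx''lt)
      · exact le_q (q_mem hpos1).1 (by omega)
    have hx''notpp : ¬(IsPrimePow x'' ∨ x'' = 1) := by
      intro h'
      have h'' : x'' ≤ q x'' := le_q h' le_rfl
      rw [hqx''] at h''
      omega
    have hPx'' : P x'' = xi s := by
      have h2 := hx''notpp
      push_neg at h2
      rw [P_eq h2.2 h2.1, hqx'']
      omega
    have hSx'' : S x'' = s + 1 := by
      rw [S_succ (by omega) hx''notpp, hPx'', hSs]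
    have hXle : X ≤ x'' := Nat.sInf_le ⟨by omega, hSx''⟩
    omega
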